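/- For any finite alphabet A = {a_0 < a_1 < … < a_d} and any β with 1 < β ≤ 1 + (a_d − a_0)/max_{0≤j<d}(a_{j+1} − a_j), every x in the interval [a_0/(β−1), a_d/(β−1)] has at least one β-expansion over A, i.e., there exists (u_k) ∈ A^ℕ with x = Σ_{k≥1} u_k β^{-k}. -/

import Mathlib

/-- for 1 < β ≤ 1 + (a_d − a_0)/max gap, every
x ∈ [a_0/(β−1), a_d/(β−1)] has a β-expansion over the alphabet. -/
theorem stmt_2 (d : ℕ) (hd : 0 < d) (a : ℕ → ℝ) (ha : ∀ i < d, a i < a (i + 1))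
    (β : ℝ) (hβ1 : 1 < β)
    (hβ2 : β ≤ 1 + (a d - a 0) /
      ((Finset.range d).sup' (Finset.nonempty_range_iff.2 hd.ne') fun j => a (j + 1) - a j)) :
    ∀ x : ℝ, a 0 / (β - 1) ≤ x → x ≤ a d / (β - 1) →
      ∃ u : ℕ → ℕ, (∀ k, u k ≤ d) ∧ x = ∑' k : ℕ, a (u k) / β ^ (k + 1) := by
  classical
  intro x hxL hxR
  set G := (Finset.range d).sup' (Finset.nonempty_range_iff.2 hd.ne')
      (fun j => a (j + 1) - a j) with hGdef
  have hβ0 : (0:ℝ) < β := lt_trans one_pos hβ1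
  have hb1 : (0:ℝ) < β - 1 := sub_pos.2 hβ1
  have hbne : β - 1 ≠ 0 := ne_of_gt hb1
  have hβne : β ≠ 0 := ne_of_gt hβ0
  set L := a 0 / (β - 1) with hLdef
  set R := a d / (β - 1) with hRdef
  -- monotonicity of a on [0, d]
  have hmono : ∀ i k, i + k ≤ d → a i ≤ a (i + k) := by
    intro i k
    induction k with
    | zero => intro _; simp
    | succ n ih =>
      intro h
      have h1 : i + n ≤ d := by omega
      have h2 : i + n < d := by omega
      have : i + (n + 1) = (i + n) + 1 := by omega
      rw [this]
      exact le_trans (ih h1) (le_of_lt (ha (i + n) h2))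
  have hA : ∀ j, j ≤ d → a 0 ≤ a j := by
    intro j hj
    have := hmono 0 j (by omega)
    simpa using this
  have hB : ∀ j, j ≤ d → a j ≤ a d := by
    intro j hj
    have := hmono j (d - j) (by omega)
    rwa [Nat.add_sub_cancel' hj] at this
  -- gap bound
  have hGpos : 0 < G :=
    lt_of_lt_of_le (sub_pos.2 (ha 0 hd))
      (Finset.le_sup' (fun j => a (j + 1) - a j) (Finset.mem_range.2 hd))
  have hGle : G ≤ (a d - a 0) / (β - 1) := by
    have h1 : β - 1 ≤ (a d - a 0) / G := by linarith
    have h2 : (β - 1) * G ≤ a d - a 0 := (le_div_iff₀ hGpos).1 h1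
    rw [le_div_iff₀ hb1]
    linarith
  have hgap : ∀ j, j < d → a (j + 1) - a j ≤ (a d - a 0) / (β - 1) := by
    intro j hj
    exact le_trans (Finset.le_sup' (fun j => a (j + 1) - a j) (Finset.mem_range.2 hj)) hGle
  -- key identities
  have hLid : a 0 + L = β * L := by
    rw [hLdef]; field_simp; ring
  have hRid : a d + R = β * R := by
    rw [hRdef]; field_simp; ring
  have hRsum : (a d - a 0) / (β - 1) + L = R := by
    rw [hLdef, hRdef]; field_simp; ring
  -- the digit map and transfer map
  set dig : ℝ → ℕ := fun y => Nat.findGreatest (fun j => a j + L ≤ β * y) d with hdig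
  set T : ℝ → ℝ := fun y => β * y - a (dig y) with hT
  have hdig_le : ∀ y, dig y ≤ d := fun y => Nat.findGreatest_le d
  have hdig_spec : ∀ y, L ≤ y → a (dig y) + L ≤ β * y := by
    intro y hy
    have h0 : a 0 + L ≤ β * y := by
      rw [hLid]
      exact mul_le_mul_of_nonneg_left hy (le_of_lt hβ0)
    exact Nat.findGreatest_spec (P := fun j => a j + L ≤ β * y) (Nat.zero_le d) h0
  have hstep : ∀ y, L ≤ y → y ≤ R → L ≤ T y ∧ T y ≤ R := by
    intro y hyL hyR
    constructor
    · have := hdig_spec y hyL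
      simp only [hT]
      linarith
    · rcases eq_or_lt_of_le (hdig_le y) with hjd | hjd
      · have h1 : β * y ≤ β * R := mul_le_mul_of_nonneg_left hyR (le_of_lt hβ0)
        simp only [hT, hjd]
        linarith [hRid]
      · have hnot : ¬ (a (dig y + 1) + L ≤ β * y) :=
          Nat.findGreatest_is_greatest (Nat.lt_succ_self _) hjd
        have h1 : β * y < a (dig y + 1) + L := lt_of_not_ge hnot
        have h2 := hgap (dig y) hjd
        simp only [hT]
        linarith
  -- the digit sequence
    -- orbit: T^[n] x
  set u : ℕ → ℕ := fun n => dig (T^[n] x) with hu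
  have hinv : ∀ n, L ≤ T^[n] x ∧ T^[n] x ≤ R := by
    intro n
    induction n with
    | zero => exact ⟨hxL, hxR⟩
    | succ n ih =>
      rw [Function.iterate_succ_apply']
      exact hstep _ ih.1 ih.2
  have hiter : ∀ n, T^[n + 1] x = β * T^[n] x - a (u n) := by
    intro n
    rw [Function.iterate_succ_apply']
  -- partial sums identity
  have hps : ∀ n, x = (∑ k ∈ Finset.range n, a (u k) / β ^ (k + 1)) + T^[n] x / β ^ n := by
    intro n
    induction n with
    | zero => simp
    | succ n ih =>
      rw [Finset.sum_range_succ, hiter n]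
      have hpow : (β : ℝ) ^ n ≠ 0 := pow_ne_zero _ hβne
      have key : T^[n] x / β ^ n
          = a (u n) / β ^ (n + 1) + (β * T^[n] x - a (u n)) / β ^ (n + 1) := by
        field_simp
        try ring
      linarith [key]
  -- summability
  set f : ℕ → ℝ := fun k => a (u k) / β ^ (k + 1) with hf
  have hu_le : ∀ n, u n ≤ d := fun n => hdig_le _
  set C := max |a 0| |a d| with hC
  have hinvβ0 : (0:ℝ) ≤ β⁻¹ := inv_nonneg.2 (le_of_lt hβ0)
  have hinvβ1 : β⁻¹ < 1 := inv_lt_one_of_one_lt₀ hβ1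
  have hbd : ∀ k, ‖f k‖ ≤ (C * β⁻¹) * β⁻¹ ^ k := by
    intro k
    have hpow : (0:ℝ) < β ^ (k + 1) := pow_pos hβ0 _
    have h1 : |a (u k)| ≤ C :=
      abs_le_max_abs_abs (hA _ (hu_le k)) (hB _ (hu_le k))
    have h2 : ‖f k‖ = |a (u k)| / β ^ (k + 1) := by
      simp only [hf, Real.norm_eq_abs, abs_div, abs_of_pos hpow]
    have h3 : |a (u k)| / β ^ (k + 1) ≤ C / β ^ (k + 1) := by
      gcongr
    have h4 : C / β ^ (k + 1) = (C * β⁻¹) * β⁻¹ ^ k := by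
      rw [div_eq_mul_inv, ← inv_pow, pow_succ]
      ring
    rw [h2]
    linarith [h3, h4.le, h4.ge]
  have hg : Summable fun k : ℕ => (C * β⁻¹) * β⁻¹ ^ k :=
    (summable_geometric_of_lt_one hinvβ0 hinvβ1).mul_left _
  have hsummable : Summable f := Summable.of_norm_bounded hg hbd
  -- the tail tends to zero
  set B := max |L| |R| with hB'
  have htail : Filter.Tendsto (fun n => T^[n] x / β ^ n) Filter.atTop (nhds 0) := by
    refine squeeze_zero_norm (a := fun n => B * β⁻¹ ^ n) ?_ ?_
    · intro n
      have hpow : (0:ℝ) < β ^ n := pow_pos hβ0 _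
      have h1 : |T^[n] x| ≤ B := abs_le_max_abs_abs (hinv n).1 (hinv n).2
      have h2 : ‖T^[n] x / β ^ n‖ = |T^[n] x| / β ^ n := by
        rw [Real.norm_eq_abs, abs_div, abs_pow, abs_of_pos hβ0]
      rw [h2]
      show |T^[n] x| / β ^ n ≤ B * β⁻¹ ^ n
      rw [inv_pow, ← div_eq_mul_inv]
      gcongr
    · have := (tendsto_pow_atTop_nhds_zero_of_lt_one hinvβ0 hinvβ1).const_mul B
      simpa using this
  have hten : Filter.Tendsto (fun n => ∑ k ∈ Finset.range n, f k) Filter.atTop (nhds x) := by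
    have heq : (fun n => ∑ k ∈ Finset.range n, f k) = fun n => x - T^[n] x / β ^ n := by
      funext n
      have := hps n
      simp only [hf]
      linarith
    rw [heq]
    have := Filter.Tendsto.sub (tendsto_const_nhds (x := x) (f := Filter.atTop)) htail
    simpa using this
  refine ⟨u, hu_le, ?_⟩
  exact tendsto_nhds_unique hten hsummable.hasSum.tendsto_sum_nat
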